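/- Let u_{3c} = (α, 0, -α)^T and u_{2c} = (β, -2β, β)^T with α, β > 0, and let W = {(x,y,z)^T : x+y+z = 0}. Suppose u = P_σ u_{3c} and v = P_σ u_{2c} for some permutation matrix P_σ, and suppose u', v' ∈ R³ satisfy (u' v') = (u v) R(θ) for a 2×2 rotation R(θ), with u' a permutation of u_{3c} and v' a permutation of u_{2c}. Then there exists a permutation matrix P'_σ such that (u v) R(θ) = P'_σ (±u, v), i.e., u' = ±P'_σ u and v' = P'_σ v. -/

import Mathlib

private def cycA : Equiv.Perm (Fin 3) := ⟨![1,2,0], ![2,0,1], by decide, by decide⟩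
private def cycC : Equiv.Perm (Fin 3) := ⟨![2,0,1], ![1,2,0], by decide, by decide⟩

set_option maxHeartbeats 1000000


/-- Let `u_{3c} = (α,0,-α)ᵀ`, `u_{2c} = (β,-2β,β)ᵀ` with `α, β > 0`. Suppose
`u = P_σ u_{3c}`, `v = P_σ u_{2c}` for some permutation `σ`, and `(u' v') = (u v) R(θ)`
for a 2×2 rotation `R(θ)`, where `u'` is a permutation of `u_{3c}` and `v'` a permutation of
`u_{2c}`. Then there is a permutation `π` and a sign `ε ∈ {-1,1}` with
`u' = ε (u ∘ π)` and `v' = v ∘ π` (i.e. `(u v) R(θ) = P'_σ (±u, v)`). -/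
theorem unmix_lemma (α β : ℝ) (hα : 0 < α) (hβ : 0 < β)
    (σ : Equiv.Perm (Fin 3)) (θ : ℝ)
    (u v u' v' : Fin 3 → ℝ)
    (hu : u = fun i => ![α, 0, -α] (σ i))
    (hv : v = fun i => ![β, -2 * β, β] (σ i))
    (hu' : u' = Real.cos θ • u + Real.sin θ • v)
    (hv' : v' = (-Real.sin θ) • u + Real.cos θ • v)
    (hu'perm : ∃ τ : Equiv.Perm (Fin 3), u' = fun i => ![α, 0, -α] (τ i))
    (hv'perm : ∃ ρ : Equiv.Perm (Fin 3), v' = fun i => ![β, -2 * β, β] (ρ i)) :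
    ∃ (π : Equiv.Perm (Fin 3)) (ε : ℝ), (ε = 1 ∨ ε = -1) ∧
      (u' = fun i => ε * u (π i)) ∧ (v' = fun i => v (π i)) := by
  obtain ⟨ρ, hρ⟩ := hv'perm
  obtain ⟨τ, hτ⟩ := hu'perm
  set s := Real.sin θ with hs
  set c := Real.cos θ with hc
  have pyth : c ^ 2 + s ^ 2 = 1 := Real.cos_sq_add_sin_sq θ
  have hNval : ∀ k : Fin 3, ![β, -2 * β, β] k = β ∨ ![β, -2 * β, β] k = -2 * β := by
    intro k; fin_cases k <;> simp
  have hMval : ∀ k : Fin 3, ![α, 0, -α] k = α ∨ ![α, 0, -α] k = 0 ∨ ![α, 0, -α] k = -α := by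
    intro k; fin_cases k <;> simp
  have hveq : ∀ j : Fin 3,
      -s * ![α, 0, -α] j + c * ![β, -2 * β, β] j = ![β, -2 * β, β] (ρ (σ.symm j)) := by
    intro j
    have h1 := congrFun hρ (σ.symm j)
    rw [hv', hu, hv] at h1
    simpa using h1
  have hueq : ∀ j : Fin 3,
      c * ![α, 0, -α] j + s * ![β, -2 * β, β] j = ![α, 0, -α] (τ (σ.symm j)) := by
    intro j
    have h1 := congrFun hτ (σ.symm j)
    rw [hu', hu, hv] at h1
    simpa using h1
  have hv0 : -s * α + c * β = β ∨ -s * α + c * β = -2 * β := by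
    have h := hveq 0
    simp only [Matrix.cons_val_zero] at h
    rw [h]; exact hNval _
  have hv1 : -s * 0 + c * (-2 * β) = β ∨ -s * 0 + c * (-2 * β) = -2 * β := by
    have h := hveq 1
    simp only [Matrix.cons_val_one, Matrix.head_cons, Matrix.cons_val_zero] at h
    rw [h]; exact hNval _
  have hu1 : c * 0 + s * (-2 * β) = α ∨ c * 0 + s * (-2 * β) = 0 ∨ c * 0 + s * (-2 * β) = -α := by
    have h := hueq 1
    simp only [Matrix.cons_val_one, Matrix.head_cons, Matrix.cons_val_zero] at h
    rw [h]; exact hMval _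
  rcases hv1 with h1 | h1
  · -- c = -1/2
    have hcval : c = -(1/2) := by nlinarith
    rcases hv0 with h0 | h0
    · -- sα = -3β/2, case C: cycle 0↦2,1↦0,2↦1
      have hsα : s * α = -((3/2) * β) := by nlinarith
      have hsneg : s < 0 := by nlinarith
      have hsβ : s * β = -(α / 2) := by
        rcases hu1 with h | h | h
        · nlinarith [h]
        · nlinarith [h, mul_pos (neg_pos.2 hsneg) hβ]
        · nlinarith [h, mul_pos (neg_pos.2 hsneg) hβ]
      refine ⟨(σ.trans cycC).trans σ.symm, 1,
        Or.inl rfl, ?_, ?_⟩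
      · funext i
        have key : ∀ j : Fin 3, c * ![α, 0, -α] j + s * ![β, -2 * β, β] j
            = ![α, 0, -α] (cycC j) := by
          intro j; fin_cases j <;> simp [hcval, cycA, cycC, Equiv.coe_fn_mk] <;> linarith [hsα, hsβ]
        have hk := key (σ i)
        rw [hu', hu, hv]
        simp only [Pi.add_apply, Pi.smul_apply, smul_eq_mul, Equiv.trans_apply,
          Equiv.apply_symm_apply, one_mul]
        exact hk
      · funext i
        have key : ∀ j : Fin 3, -s * ![α, 0, -α] j + c * ![β, -2 * β, β] j
            = ![β, -2 * β, β] (cycC j) := by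
          intro j; fin_cases j <;> simp [hcval, cycA, cycC, Equiv.coe_fn_mk] <;> linarith [hsα, hsβ]
        have hk := key (σ i)
        rw [hv', hu, hv]
        simp only [Pi.add_apply, Pi.smul_apply, smul_eq_mul, Equiv.trans_apply,
          Equiv.apply_symm_apply]
        exact hk
    · -- sα = 3β/2, case B: cycle 0↦1,1↦2,2↦0
      have hsα : s * α = (3/2) * β := by nlinarith
      have hspos : 0 < s := by nlinarith
      have hsβ : s * β = α / 2 := by
        rcases hu1 with h | h | h
        · nlinarith [h, mul_pos hspos hβ]
        · nlinarith [h, mul_pos hspos hβ]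
        · nlinarith [h]
      refine ⟨(σ.trans cycA).trans σ.symm, 1,
        Or.inl rfl, ?_, ?_⟩
      · funext i
        have key : ∀ j : Fin 3, c * ![α, 0, -α] j + s * ![β, -2 * β, β] j
            = ![α, 0, -α] (cycA j) := by
          intro j; fin_cases j <;> simp [hcval, cycA, cycC, Equiv.coe_fn_mk] <;> linarith [hsα, hsβ]
        have hk := key (σ i)
        rw [hu', hu, hv]
        simp only [Pi.add_apply, Pi.smul_apply, smul_eq_mul, Equiv.trans_apply,
          Equiv.apply_symm_apply, one_mul]
        exact hk
      · funext i
        have key : ∀ j : Fin 3, -s * ![α, 0, -α] j + c * ![β, -2 * β, β] j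
            = ![β, -2 * β, β] (cycA j) := by
          intro j; fin_cases j <;> simp [hcval, cycA, cycC, Equiv.coe_fn_mk] <;> linarith [hsα, hsβ]
        have hk := key (σ i)
        rw [hv', hu, hv]
        simp only [Pi.add_apply, Pi.smul_apply, smul_eq_mul, Equiv.trans_apply,
          Equiv.apply_symm_apply]
        exact hk
  · -- c = 1, s = 0
    have hcval : c = 1 := by nlinarith
    have hsval : s = 0 := by nlinarith [sq_nonneg s]
    refine ⟨1, 1, Or.inl rfl, ?_, ?_⟩
    · funext i
      rw [hu']
      simp [hcval, hsval]
    · funext i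
      rw [hv']
      simp [hcval, hsval]
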